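/- Let n ≥ 2, let (X,d) be a metric space with |X| ≥ n, and let T : X → X be a mapping contracting total pairwise distance on n points with constant α ∈ [0,1). If x ∈ X is an accumulation point of X (every open ball centered at x contains infinitely many points of X), then d(Tx,Ty) ≤ α·d(x,y) holds for all y ∈ X. -/

import Mathlib

noncomputable def totalS {X : Type*} [MetricSpace X] {n : ℕ} (x : Fin n → X) : ℝ :=
  ∑ i : Fin n, ∑ j ∈ Finset.Ioi i, dist (x i) (x j)

lemma totalS_nonneg {X : Type*} [MetricSpace X] {n : ℕ} (w : Fin n → X) : 0 ≤ totalS w :=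
  Finset.sum_nonneg fun _ _ => Finset.sum_nonneg fun _ _ => dist_nonneg

lemma term_le_totalS {X : Type*} [MetricSpace X] {n : ℕ} (w : Fin n → X) {i j : Fin n}
    (hij : i < j) : dist (w i) (w j) ≤ totalS w := by
  have h1 : dist (w i) (w j) ≤ ∑ j' ∈ Finset.Ioi i, dist (w i) (w j') :=
    Finset.single_le_sum (fun _ _ => dist_nonneg) (Finset.mem_Ioi.2 hij)
  refine h1.trans ?_
  exact Finset.single_le_sum (f := fun i' => ∑ j' ∈ Finset.Ioi i', dist (w i') (w j'))
    (fun _ _ => Finset.sum_nonneg fun _ _ => dist_nonneg) (Finset.mem_univ i)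

lemma sum_Ioi_const_le {n : ℕ} {c : ℝ} (hc : 0 ≤ c) :
    ∑ i : Fin n, ∑ _j ∈ Finset.Ioi i, c ≤ (n : ℝ)^2 * c := by
  have h1 : ∀ i : Fin n, ∑ _j ∈ Finset.Ioi i, c ≤ (n : ℝ) * c := by
    intro i
    rw [Finset.sum_const, nsmul_eq_mul]
    have h := Finset.card_le_univ (Finset.Ioi i)
    simp only [Finset.card_univ, Fintype.card_fin] at h
    have h' : ((Finset.Ioi i).card : ℝ) ≤ (n : ℝ) := by exact_mod_cast h
    nlinarith
  calc ∑ i : Fin n, ∑ _j ∈ Finset.Ioi i, c ≤ ∑ _i : Fin n, (n : ℝ) * c :=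
        Finset.sum_le_sum fun i _ => h1 i
    _ = (n : ℝ) * ((n : ℝ) * c) := by rw [Finset.sum_const, nsmul_eq_mul]; simp
    _ = (n : ℝ)^2 * c := by ring

lemma totalS_le_of_ball {X : Type*} [MetricSpace X] {n : ℕ} (w : Fin n → X) (c : X) (r : ℝ)
    (hr : 0 ≤ r) (h : ∀ i, dist (w i) c ≤ r) : totalS w ≤ (n : ℝ)^2 * (2 * r) := by
  have h1 : totalS w ≤ ∑ i : Fin n, ∑ _j ∈ Finset.Ioi i, (2 * r) := by
    refine Finset.sum_le_sum fun i _ => Finset.sum_le_sum fun j _ => ?_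
    calc dist (w i) (w j) ≤ dist (w i) c + dist c (w j) := dist_triangle _ _ _
      _ ≤ r + r := by
          have hj := h j; rw [dist_comm] at hj; linarith [h i]
      _ = 2 * r := by ring
  exact h1.trans (sum_Ioi_const_le (by linarith))

theorem stmt_8 {X : Type*} [MetricSpace X] (n : ℕ) (hn : 2 ≤ n)
    (hcard : ∃ f : Fin n → X, Function.Injective f)
    (T : X → X) (α : ℝ) (hα0 : 0 ≤ α) (hα1 : α < 1)
    (hT : ∀ x : Fin n → X, Function.Injective x → totalS (T ∘ x) ≤ α * totalS x)
    (x : X) (hacc : ∀ r : ℝ, 0 < r → (Metric.ball x r).Infinite) :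
    ∀ y : X, dist (T x) (T y) ≤ α * dist x y := by
  obtain ⟨m, rfl⟩ : ∃ m, n = m + 2 := ⟨n - 2, by omega⟩
  intro y
  by_cases hyx : y = x
  · subst hyx; simp [mul_nonneg hα0 dist_nonneg]
  -- notation
  set s₀ : ℝ := dist x y with hs₀
  set t : ℝ := dist (T x) (T y) with ht
  set N : ℝ := (m + 2 : ℝ) with hN
  have hN2 : (0:ℝ) < N := by positivity
  set C : ℝ := (1 + N) * (2 * N^2) with hC
  have hCpos : 0 < C := by positivity
  -- key estimate for every ε > 0
  have key : ∀ ε : ℝ, 0 < ε → t ≤ α * s₀ + C * ε := by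
    intro ε hε
    set D : ℝ := N^2 * (2 * ε) with hD
    have hDpos : 0 < D := by positivity
    -- pick m+2 points in the punctured ball
    have hinf : (Metric.ball x ε \ {x, y}).Infinite :=
      (hacc ε hε).diff (Set.toFinite {x, y})
    set e := hinf.natEmbedding with he
    set g : Fin (m + 2) → X := fun i => (e i.val : X) with hg
    have hg_inj : Function.Injective g := by
      intro i j hij
      have : (i : ℕ) = (j : ℕ) := e.injective (Subtype.ext hij)
      exact Fin.ext this
    have hg_mem : ∀ i, g i ∈ Metric.ball x ε \ {x, y} := fun i => (e i.val).2
    have hg_ball : ∀ i, dist (g i) x ≤ ε := fun i => le_of_lt (by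
      have := (hg_mem i).1; rwa [Metric.mem_ball] at this)
    have hg_ne_x : ∀ i, g i ≠ x := fun i => by
      have := (hg_mem i).2; simp at this; exact this.1
    have hg_ne_y : ∀ i, g i ≠ y := fun i => by
      have := (hg_mem i).2; simp at this; exact this.2
    -- auxiliary tuple v to control dist (T x) (T (g j))
    set v : Fin (m + 2) → X := fun i => if i = 0 then x else g i with hv
    have hv_inj : Function.Injective v := by
      intro i j hij
      simp only [hv] at hij
      by_cases hi : i = 0 <;> by_cases hj : j = 0
      · rw [hi, hj]
      · rw [if_pos hi, if_neg hj] at hij; exact absurd hij.symm (hg_ne_x j)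
      · rw [if_neg hi, if_pos hj] at hij; exact absurd hij (hg_ne_x i)
      · rw [if_neg hi, if_neg hj] at hij; exact hg_inj hij
    have hv_ball : ∀ i, dist (v i) x ≤ ε := by
      intro i
      by_cases hi : i = 0
      · simp [hv, hi]; linarith
      · simp only [hv, if_neg hi]; exact hg_ball i
    have hvS : totalS v ≤ D := by
      have := totalS_le_of_ball v x ε (le_of_lt hε) hv_ball
      simpa [hD, hN] using this
    have hTvS : totalS (T ∘ v) ≤ D := by
      have h1 := hT v hv_inj
      nlinarith [totalS_nonneg v]
    have hTxg : ∀ j : Fin (m + 2), j ≠ 0 → dist (T x) (T (g j)) ≤ D := by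
      intro j hj
      have h0j : (0 : Fin (m + 2)) < j := Fin.pos_of_ne_zero hj
      have := term_le_totalS (T ∘ v) h0j
      simp only [Function.comp_apply, hv, if_pos rfl, if_neg hj] at this
      exact this.trans hTvS
    -- main tuple u
    set u : Fin (m + 2) → X := fun i => if i = 0 then x else if i = 1 then y else g i with huu
    have h01 : (0 : Fin (m + 2)) < 1 := by
      rw [Fin.lt_def]; simp
    have hne01 : (0 : Fin (m + 2)) ≠ 1 := ne_of_lt h01
    have hu0 : u 0 = x := by simp [huu]
    have hu1 : u 1 = y := by simp [huu, hne01.symm]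
    have huj : ∀ j : Fin (m + 2), j ≠ 0 → j ≠ 1 → u j = g j := by
      intro j h1 h2; simp [huu, h1, h2]
    have hu_inj : Function.Injective u := by
      intro i j hij
      by_cases hi0 : i = 0
      · by_cases hj0 : j = 0
        · rw [hi0, hj0]
        · by_cases hj1 : j = 1
          · exfalso
            rw [hi0, hj1, hu0, hu1] at hij
            exact hyx hij.symm
          · exfalso
            rw [hi0, hu0, huj j hj0 hj1] at hij
            exact hg_ne_x j hij.symm
      · by_cases hi1 : i = 1
        · by_cases hj0 : j = 0
          · exfalso
            rw [hi1, hj0, hu0, hu1] at hij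
            exact hyx hij
          · by_cases hj1 : j = 1
            · rw [hi1, hj1]
            · exfalso
              rw [hi1, hu1, huj j hj0 hj1] at hij
              exact hg_ne_y j hij.symm
        · by_cases hj0 : j = 0
          · exfalso
            rw [hj0, hu0, huj i hi0 hi1] at hij
            exact hg_ne_x i hij
          · by_cases hj1 : j = 1
            · exfalso
              rw [hj1, hu1, huj i hi0 hi1] at hij
              exact hg_ne_y i hij
            · rw [huj i hi0 hi1, huj j hj0 hj1] at hij
              exact hg_inj hij
    set k : ℕ := (Finset.Ioi (1 : Fin (m + 2))).card with hk
    have hk_le : (k : ℝ) ≤ N := by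
      have h := Finset.card_le_univ (Finset.Ioi (1 : Fin (m + 2)))
      simp only [Finset.card_univ, Fintype.card_fin] at h
      rw [hN]; exact_mod_cast h
    -- upper bound for totalS u
    set ind : Fin (m + 2) → Fin (m + 2) → ℝ :=
      fun i j => if i = 0 ∧ j = 1 then s₀ else if i = 1 then s₀ else 0 with hind
    have hub : totalS u ≤ (s₀ + (k : ℝ) * s₀) + N^2 * (2 * ε) := by
      have hstep : totalS u ≤ ∑ i : Fin (m+2), ∑ j ∈ Finset.Ioi i, (ind i j + 2 * ε) := by
        refine Finset.sum_le_sum fun i _ => Finset.sum_le_sum fun j hj => ?_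
        have hij : i < j := Finset.mem_Ioi.1 hj
        by_cases hi0 : i = 0
        · by_cases hj1 : j = 1
          · rw [hi0, hj1, hu0, hu1]
            simp only [hind, hi0, hj1, and_self, if_pos]
            linarith
          · have hj0 : j ≠ 0 := by
              intro h; rw [hi0, h] at hij; exact lt_irrefl _ hij
            rw [hi0, hu0, huj j hj0 hj1]
            have hiz : ind 0 j = 0 := by simp [hind, hj1, hne01]
            rw [hiz]
            have := hg_ball j
            rw [dist_comm] at this
            linarith
        · by_cases hi1 : i = 1
          · have hj0 : j ≠ 0 := by
              intro h; rw [h] at hij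
              exact absurd hij (by simp [Fin.lt_def])
            have hj1 : j ≠ 1 := by
              intro h; rw [hi1, h] at hij; exact lt_irrefl _ hij
            rw [hi1, hu1, huj j hj0 hj1]
            have hiz : ind 1 j = s₀ := by simp [hind, hne01.symm]
            rw [hiz]
            calc dist y (g j) ≤ dist y x + dist x (g j) := dist_triangle _ _ _
              _ ≤ s₀ + 2 * ε := by
                  have h2 := hg_ball j; rw [dist_comm] at h2
                  rw [dist_comm]; simp only [← hs₀]; linarith
          · have hj0 : j ≠ 0 := by
              intro h; rw [h] at hij
              exact absurd hij (by simp [Fin.lt_def])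
            have hj1 : j ≠ 1 := by
              intro h
              apply hi0
              have : i < 1 := h ▸ hij
              rw [Fin.lt_def] at this
              simpa using this
            rw [huj i hi0 hi1, huj j hj0 hj1]
            have : ind i j = 0 := by simp [hind, hi0, hi1]
            rw [this]
            calc dist (g i) (g j) ≤ dist (g i) x + dist x (g j) := dist_triangle _ _ _
              _ ≤ 0 + 2 * ε := by
                  have h2 := hg_ball j; rw [dist_comm] at h2
                  linarith [hg_ball i]
      refine hstep.trans ?_
      have hsplit : ∑ i : Fin (m+2), ∑ j ∈ Finset.Ioi i, (ind i j + 2 * ε)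
          = (∑ i : Fin (m+2), ∑ j ∈ Finset.Ioi i, ind i j)
            + ∑ i : Fin (m+2), ∑ _j ∈ Finset.Ioi i, (2*ε) := by
        rw [← Finset.sum_add_distrib]
        congr 1; ext i; rw [← Finset.sum_add_distrib]
      rw [hsplit]
      have hind_sum : ∑ i : Fin (m+2), ∑ j ∈ Finset.Ioi i, ind i j = s₀ + (k : ℝ) * s₀ := by
        have hF0 : ∑ j ∈ Finset.Ioi (0 : Fin (m+2)), ind 0 j = s₀ := by
          have : ∀ j ∈ Finset.Ioi (0 : Fin (m+2)), ind 0 j = if j = 1 then s₀ else 0 := by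
            intro j _; simp [hind, hne01]
          rw [Finset.sum_congr rfl this, Finset.sum_ite_eq' (Finset.Ioi (0 : Fin (m+2))) 1]
          rw [if_pos (Finset.mem_Ioi.2 h01)]
        have hF1 : ∑ j ∈ Finset.Ioi (1 : Fin (m+2)), ind 1 j = (k : ℝ) * s₀ := by
          have : ∀ j ∈ Finset.Ioi (1 : Fin (m+2)), ind 1 j = s₀ := by
            intro j _; simp [hind, hne01.symm]
          rw [Finset.sum_congr rfl this, Finset.sum_const, hk, nsmul_eq_mul]
        have hsub : ∑ i ∈ ({0, 1} : Finset (Fin (m+2))),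
            (∑ j ∈ Finset.Ioi i, ind i j)
            = ∑ i : Fin (m+2), ∑ j ∈ Finset.Ioi i, ind i j := by
          refine Finset.sum_subset (Finset.subset_univ _) ?_
          intro i _ hi
          simp only [Finset.mem_insert, Finset.mem_singleton, not_or] at hi
          refine Finset.sum_eq_zero fun j _ => ?_
          simp [hind, hi.1, hi.2]
        rw [← hsub, Finset.sum_pair hne01, hF0, hF1]
      rw [hind_sum]
      have := sum_Ioi_const_le (n := m + 2) (c := 2 * ε) (by linarith)
      have h2 : ((m + 2 : ℕ) : ℝ) = N := by rw [hN]; push_cast; ring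
      rw [h2] at this
      linarith
    -- lower bound for totalS (T ∘ u)
    have hlb : t + (k : ℝ) * (t - D) ≤ totalS (T ∘ u) := by
      have hsub : ∑ i ∈ ({0, 1} : Finset (Fin (m+2))),
          (∑ j ∈ Finset.Ioi i, dist (T (u i)) (T (u j)))
          ≤ totalS (T ∘ u) := by
        refine Finset.sum_le_sum_of_subset_of_nonneg (Finset.subset_univ _) ?_
        intro i _ _
        exact Finset.sum_nonneg fun _ _ => dist_nonneg
      have hG0 : t ≤ ∑ j ∈ Finset.Ioi (0 : Fin (m+2)), dist (T (u 0)) (T (u j)) := by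
        calc t = dist (T (u 0)) (T (u 1)) := by rw [hu0, hu1]
          _ ≤ _ := Finset.single_le_sum
              (f := fun j => dist (T (u 0)) (T (u j)))
              (fun j _ => dist_nonneg) (Finset.mem_Ioi.2 h01)
      have hG1 : (k : ℝ) * (t - D)
          ≤ ∑ j ∈ Finset.Ioi (1 : Fin (m+2)), dist (T (u 1)) (T (u j)) := by
        have hpt : ∀ j ∈ Finset.Ioi (1 : Fin (m+2)), t - D ≤ dist (T (u 1)) (T (u j)) := by
          intro j hj
          have hij : (1 : Fin (m+2)) < j := Finset.mem_Ioi.1 hj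
          have hj1 : j ≠ 1 := ne_of_gt hij
          have hj0 : j ≠ 0 := by
            intro h; rw [h] at hij
            exact absurd hij (by simp [Fin.lt_def])
          rw [hu1, huj j hj0 hj1]
          have h1 : t ≤ dist (T x) (T (g j)) + dist (T (g j)) (T y) := dist_triangle _ _ _
          have h2 := hTxg j hj0
          rw [dist_comm (T (g j)) (T y)] at h1
          linarith
        calc (k : ℝ) * (t - D) = ∑ _j ∈ Finset.Ioi (1 : Fin (m+2)), (t - D) := by
              rw [Finset.sum_const, hk, nsmul_eq_mul]
          _ ≤ _ := Finset.sum_le_sum hpt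
      calc t + (k : ℝ) * (t - D)
          ≤ ∑ i ∈ ({0, 1} : Finset (Fin (m+2))),
              (∑ j ∈ Finset.Ioi i, dist (T (u i)) (T (u j))) := by
            rw [Finset.sum_pair hne01]; exact add_le_add hG0 hG1
        _ ≤ totalS (T ∘ u) := hsub
    -- combine
    have hmain := hT u hu_inj
    have hkD : (k : ℝ) * D ≤ N * D := by
      apply mul_le_mul_of_nonneg_right hk_le (le_of_lt hDpos)
    have hchain : t + (k : ℝ) * (t - D) ≤ α * ((s₀ + (k : ℝ) * s₀) + N^2 * (2*ε)) := by
      refine hlb.trans (hmain.trans ?_)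
      apply mul_le_mul_of_nonneg_left hub hα0
    have hs₀nn : 0 ≤ s₀ := dist_nonneg
    have htnn : 0 ≤ t := dist_nonneg
    have hknn : (0:ℝ) ≤ k := Nat.cast_nonneg k
    have hX : (0:ℝ) ≤ N^2 * (2*ε) := by positivity
    have hfin : (1 + (k:ℝ)) * t ≤ (1 + (k:ℝ)) * (α * s₀) + C * ε := by
      have h1 : α * (N^2 * (2*ε)) ≤ N^2 * (2*ε) := by
        calc α * (N^2 * (2*ε)) ≤ 1 * (N^2 * (2*ε)) :=
              mul_le_mul_of_nonneg_right (le_of_lt hα1) hX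
          _ = N^2 * (2*ε) := one_mul _
      have h2 : (k:ℝ) * D ≤ N * (N^2 * (2*ε)) := by
        rw [hD] at hkD ⊢; exact hkD
      have e1 : t + (k:ℝ) * (t - D) = (1 + (k:ℝ)) * t - (k:ℝ) * D := by ring
      have e2 : α * ((s₀ + (k:ℝ) * s₀) + N^2 * (2*ε))
          = (1 + (k:ℝ)) * (α * s₀) + α * (N^2 * (2*ε)) := by ring
      have e3 : C * ε = N^2 * (2*ε) + N * (N^2 * (2*ε)) := by rw [hC]; ring
      rw [e1] at hchain
      rw [e2] at hchain
      linarith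
    have hCε : 0 ≤ C * ε := le_of_lt (mul_pos hCpos hε)
    by_cases hts : t ≤ α * s₀
    · linarith
    · push_neg at hts
      nlinarith [mul_nonneg hknn (sub_nonneg.2 (le_of_lt hts)), hfin]
  -- conclude by letting ε → 0
  refine le_of_forall_pos_le_add fun δ hδ => ?_
  have h := key (δ / C) (by positivity)
  have : C * (δ / C) = δ := by field_simp
  rw [this] at h
  exact h
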